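/- A connected signed graph is balanced if and only if its Gremban expansion is disconnected. -/

import Mathlib

/-- A signed graph: a simple graph together with a symmetric `±1`-valued sign function
on its edges. -/
structure SignedGraph (V : Type*) where
  G : SimpleGraph V
  sign : V → V → ℤ
  sign_symm : ∀ u v, sign u v = sign v u
  sign_pm : ∀ u v, G.Adj u v → sign u v = 1 ∨ sign u v = -1

namespace SignedGraph

variable {V : Type*} (S : SignedGraph V)

/-- The Gremban expansion of a signed graph: each vertex `v` is doubled into the two
polarities `(v, true)` (positive) and `(v, false)` (negative); a positive edge lifts to
two edges between equal polarities, and a negative edge to two edges between opposite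
polarities. -/
def gremban : SimpleGraph (V × Bool) where
  Adj x y := S.G.Adj x.1 y.1 ∧ ((x.2 = y.2) ↔ S.sign x.1 y.1 = 1)
  symm := ⟨by
    rintro ⟨u, a⟩ ⟨v, b⟩ ⟨h, hs⟩
    refine ⟨h.symm, ?_⟩
    rw [S.sign_symm v u, eq_comm]
    exact hs⟩
  loopless := ⟨by
    rintro ⟨u, a⟩ ⟨h, _⟩
    exact S.G.irrefl h⟩

/-- The Gremban involution, swapping the two polarities of every vertex. -/
def eta : V × Bool → V × Bool := fun x => (x.1, !x.2)

end SignedGraph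

open SignedGraph

/-- A signed graph is balanced if its vertex set admits a bipartition such that all edges
within a part are positive and all edges between the parts are negative. -/
def SignedGraph.Balanced {V : Type*} (S : SignedGraph V) : Prop :=
  ∃ U : Set V, ∀ u v, S.G.Adj u v → (S.sign u v = 1 ↔ (u ∈ U ↔ v ∈ U))

namespace SignedGraph

variable {V : Type*} (S : SignedGraph V)

/-- eta as a graph homomorphism. -/
def etaHom : S.gremban →g S.gremban where
  toFun := eta
  map_rel' := by
    rintro ⟨u, a⟩ ⟨v, b⟩ ⟨h, hs⟩
    refine ⟨h, ?_⟩
    simpa [eta] using hs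

lemma reach_eta {x y : V × Bool} (h : S.gremban.Reachable x y) :
    S.gremban.Reachable (x.1, !x.2) (y.1, !y.2) :=
  h.map S.etaHom

lemma lift {u v : V} (p : S.G.Walk u v) (a : Bool) :
    ∃ c, S.gremban.Reachable (u, a) (v, c) := by
  induction p generalizing a with
  | nil => exact ⟨a, SimpleGraph.Reachable.refl _⟩
  | @cons u w v h p ih =>
    set b : Bool := if S.sign u w = 1 then a else !a with hb
    have hadj : S.gremban.Adj (u, a) (w, b) := by
      refine ⟨h, ?_⟩
      rcases S.sign_pm u w h with h1 | h1 <;> simp [hb, h1]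
    obtain ⟨c, hc⟩ := ih b
    exact ⟨c, (hadj.reachable).trans hc⟩

end SignedGraph

/-- A connected signed graph is balanced if and only if its Gremban expansion is
disconnected. -/
theorem balanced_iff_gremban_disconnected {V : Type*} (S : SignedGraph V)
    (hconn : S.G.Connected) :
    S.Balanced ↔ ¬S.gremban.Connected := by
  obtain ⟨v₀⟩ := hconn.nonempty
  constructor
  · rintro ⟨U, hU⟩ hcon
    have key : ∀ {x y : V × Bool}, S.gremban.Reachable x y →
        ((x.1 ∈ U ↔ x.2 = true) ↔ (y.1 ∈ U ↔ y.2 = true)) := by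
      intro x y h
      obtain ⟨p⟩ := h
      induction p with
      | nil => rfl
      | @cons x z y h p ih =>
        refine Iff.trans ?_ ih
        obtain ⟨hadj, hs⟩ := h
        have := (hU x.1 z.1 hadj)
        obtain ⟨u, a⟩ := x
        obtain ⟨w, b⟩ := z
        cases a <;> cases b <;> simp_all <;> tauto
    have := key (hcon.preconnected (v₀, true) (v₀, false))
    simp at this
  · intro hncon
    -- if the two polarities of v₀ are linked, the expansion is connected
    have hnr : ¬ S.gremban.Reachable (v₀, true) (v₀, false) := by
      intro hflip
      apply hncon
      have hall : ∀ w c, S.gremban.Reachable (v₀, true) (w, c) := by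
        intro w c
        obtain ⟨p⟩ := hconn.preconnected v₀ w
        obtain ⟨c', hc'⟩ := S.lift p true
        have h2 : S.gremban.Reachable (v₀, false) (w, !c') := S.reach_eta hc'
        cases c <;> cases c' <;> first | exact hc' | exact hflip.trans h2
      have : Nonempty (V × Bool) := ⟨(v₀, true)⟩
      refine ⟨fun x y => ?_⟩
      exact (hall x.1 x.2).symm.trans (hall y.1 y.2)
    refine ⟨{v | S.gremban.Reachable (v₀, true) (v, true)}, fun u v huv => ?_⟩
    have lift' : ∀ w, ¬ S.gremban.Reachable (v₀, true) (w, true) →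
        S.gremban.Reachable (v₀, true) (w, false) := by
      intro w hw
      obtain ⟨p⟩ := hconn.preconnected v₀ w
      obtain ⟨c, hc⟩ := S.lift p true
      cases c
      · exact hc
      · exact absurd hc hw
    rcases S.sign_pm u v huv with h1 | h1
    · have hadj : S.gremban.Adj (u, true) (v, true) := ⟨huv, by simp [h1]⟩
      simp only [h1, Set.mem_setOf_eq]
      exact ⟨fun _ => ⟨fun h => h.trans hadj.reachable,
        fun h => h.trans hadj.symm.reachable⟩, fun _ => trivial⟩
    · have hadjTF : S.gremban.Adj (u, true) (v, false) := ⟨huv, by simp [h1]⟩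
      have hadjFT : S.gremban.Adj (u, false) (v, true) := ⟨huv, by simp [h1]⟩
      rw [h1]
      simp only [Set.mem_setOf_eq]
      constructor
      · intro h; norm_num at h
      · intro h
        exfalso
        by_cases hu : S.gremban.Reachable (v₀, true) (u, true)
        · have hv : S.gremban.Reachable (v₀, true) (v, true) := h.mp hu
          have hvf : S.gremban.Reachable (v₀, true) (v, false) :=
            hu.trans hadjTF.reachable
          have : S.gremban.Reachable (v₀, false) (v, false) := S.reach_eta hv
          exact hnr (hvf.trans this.symm)
        · have hv : ¬ S.gremban.Reachable (v₀, true) (v, true) := fun hv => hu (h.mpr hv)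
          have huf := lift' u hu
          exact hv (huf.trans hadjFT.reachable)
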